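/- arXiv:math/0703632 — 3 statements merged into one kernel-verified Lean document; each statement's English description precedes it below -/
import Mathlib

section
/- Let τ be a partition of [0,∞), n ≥ 1 and m ≥ 1. Then Δ_{n+1}^τ(τ_m) = ⋃_{k=0}^{m−1} (Δ_n^τ(τ_k) × [τ_k, τ_{k+1})), and the sets in this union are pairwise disjoint. -/
open MeasureTheory Filter Topology
open scoped ENNReal

/-- A partition of `[0, ∞)`: a strictly increasing sequence of nonnegative reals starting
at `0` and tending to infinity. -/
structure TimePartition where
  t : ℕ → ℝ
  strictMono : StrictMono t
  zero : t 0 = 0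
  tendsto_atTop : Filter.Tendsto t Filter.atTop Filter.atTop

/-- `σ` refines `τ` if every point of `τ` is a point of `σ`. -/
def TimePartition.Refines (σ τ : TimePartition) : Prop := ∀ n, ∃ m, σ.t m = τ.t n

/-- The simplex `Δ_n(t) = {x ∈ [0,t)ⁿ : x₁ < ⋯ < xₙ}`. -/
def simplex (n : ℕ) (t : ℝ) : Set (Fin n → ℝ) :=
  {x | StrictMono x ∧ ∀ i, x i ∈ Set.Ico (0 : ℝ) t}

/-- The box `[τ_p, τ_{p+1}) = {x ∈ ℝⁿ : τ_{pᵢ} ≤ xᵢ < τ_{pᵢ+1} for all i}`. -/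
def TimePartition.box (τ : TimePartition) {n : ℕ} (p : Fin n → ℕ) : Set (Fin n → ℝ) :=
  {x | ∀ i, x i ∈ Set.Ico (τ.t (p i)) (τ.t (p i + 1))}

/-- `Δ_n^τ` at level `m`: the union of the boxes `[τ_p, τ_{p+1})` over all strictly
increasing `n`-tuples `p` with entries in `{0, …, m−1}`. -/
def TimePartition.simplexDisc (τ : TimePartition) (n m : ℕ) : Set (Fin n → ℝ) :=
  ⋃ p ∈ {p : Fin n → ℕ | StrictMono p ∧ ∀ i, p i < m}, τ.box p

/-- `Δ_n^τ(s)`: equal to `TimePartition.simplexDisc τ n m` for the unique `m` with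
`s ∈ [τ_m, τ_{m+1})`, and empty if there is no such `m` (i.e. if `s < 0`). -/
def TimePartition.simplexDiscAt (τ : TimePartition) (n : ℕ) (s : ℝ) : Set (Fin n → ℝ) :=
  ⋃ m ∈ {m : ℕ | s ∈ Set.Ico (τ.t m) (τ.t (m + 1))}, τ.simplexDisc n m

lemma discAt_eq (τ : TimePartition) (n k : ℕ) :
    τ.simplexDiscAt n (τ.t k) = τ.simplexDisc n k := by
  have h : {m : ℕ | τ.t k ∈ Set.Ico (τ.t m) (τ.t (m + 1))} = {k} := by
    ext m
    simp only [Set.mem_setOf_eq, Set.mem_Ico, Set.mem_singleton_iff,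
      τ.strictMono.le_iff_le, τ.strictMono.lt_iff_lt]
    omega
  rw [TimePartition.simplexDiscAt, h]
  simp

/-- `Δ_{n+1}^τ(τ_m) = ⋃_{k=0}^{m−1} (Δ_n^τ(τ_k) × [τ_k, τ_{k+1}))`, and
the sets in this union are pairwise disjoint. -/
theorem statement11 (τ : TimePartition) (n m : ℕ) (hn : 1 ≤ n) (hm : 1 ≤ m) :
    (τ.simplexDiscAt (n + 1) (τ.t m) =
      ⋃ k ∈ Set.Iio m,
        {x : Fin (n + 1) → ℝ | Fin.init x ∈ τ.simplexDiscAt n (τ.t k) ∧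
          x (Fin.last n) ∈ Set.Ico (τ.t k) (τ.t (k + 1))}) ∧
    (Set.Iio m).PairwiseDisjoint
      (fun k => {x : Fin (n + 1) → ℝ | Fin.init x ∈ τ.simplexDiscAt n (τ.t k) ∧
        x (Fin.last n) ∈ Set.Ico (τ.t k) (τ.t (k + 1))}) := by
  constructor
  · rw [discAt_eq]
    ext x
    simp only [TimePartition.simplexDisc, Set.mem_iUnion, Set.mem_setOf_eq, exists_prop,
      Set.mem_Iio, discAt_eq]
    constructor
    · rintro ⟨p, ⟨hp, hpm⟩, hx⟩
      refine ⟨p (Fin.last n), hpm _, ⟨Fin.init p, ⟨?_, ?_⟩, ?_⟩, hx (Fin.last n)⟩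
      · exact fun i j hij => hp (by simpa using hij)
      · exact fun i => hp (Fin.castSucc_lt_last i)
      · exact fun i => hx i.castSucc
    · rintro ⟨k, hk, ⟨q, ⟨hq, hqk⟩, hxq⟩, hlast⟩
      refine ⟨Fin.snoc q k, ⟨?_, ?_⟩, ?_⟩
      · intro i j hij
        induction j using Fin.lastCases with
        | last =>
          obtain ⟨i', rfl⟩ := Fin.exists_castSucc_eq.2 (Fin.ne_last_of_lt hij)
          simpa using hqk i'
        | cast j' =>
          obtain ⟨i', rfl⟩ := Fin.exists_castSucc_eq.2 (Fin.ne_last_of_lt hij)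
          simpa using hq (by simpa using hij)
      · intro i
        induction i using Fin.lastCases with
        | last => simpa using hk
        | cast i' => simpa using lt_trans (hqk i') hk
      · intro i
        induction i using Fin.lastCases with
        | last => simpa using hlast
        | cast i' => simpa [Fin.init] using hxq i'
  · intro k hk l hl hkl
    simp only [Function.onFun, Set.disjoint_left]
    rintro x ⟨-, hxk⟩ ⟨-, hxl⟩
    rcases lt_or_gt_of_ne hkl with h | h
    · have := τ.strictMono.monotone (show k + 1 ≤ l by omega)
      have := hxk.2
      have := hxl.1
      linarith
    · have := τ.strictMono.monotone (show l + 1 ≤ k by omega)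
      have := hxl.2
      have := hxk.1
      linarith
end

section
/- Let τ be a partition of [0,∞), n ≥ 1, m ≥ 0 and t ∈ [τ_m, τ_{m+1}). Then the set {(t_1, …, t_n, s) : s ∈ [0, τ_m), (t_1, …, t_n) ∈ Δ_n(s) ∖ Δ_n^τ(s)} ∪ {(t_1, …, t_n, s) : s ∈ [τ_m, t), (t_1, …, t_n) ∈ Δ_n(s)} is contained in Δ_{n+1}(t) ∖ Δ_{n+1}^τ(t). -/
open MeasureTheory Filter Topology
open scoped ENNReal

lemma TimePartition.interval_unique (τ : TimePartition) {m m' : ℕ} {t : ℝ}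
    (h : t ∈ Set.Ico (τ.t m) (τ.t (m + 1))) (h' : t ∈ Set.Ico (τ.t m') (τ.t (m' + 1))) :
    m = m' := by
  by_contra hne
  rcases Nat.lt_or_ge m m' with hlt | hge
  · exact absurd (le_trans (τ.strictMono.monotone hlt) h'.1) (not_le.2 h.2)
  · have hlt : m' < m := lt_of_le_of_ne hge (Ne.symm hne)
    exact absurd (le_trans (τ.strictMono.monotone hlt) h.1) (not_le.2 h'.2)

lemma mem_simplex_snoc {n : ℕ} {x : Fin (n + 1) → ℝ} {t : ℝ}
    (h0 : 0 ≤ x (Fin.last n)) (hlt : x (Fin.last n) < t)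
    (hx : Fin.init x ∈ simplex n (x (Fin.last n))) :
    x ∈ simplex (n + 1) t := by
  obtain ⟨hmono, hmem⟩ := hx
  constructor
  · intro i j hij
    by_cases hj : j = Fin.last n
    · subst hj
      have hi : i < Fin.last n := hij
      have := (hmem (i.castPred hi.ne)).2
      simpa [Fin.init] using this
    · have hj' : j < Fin.last n := lt_of_le_of_ne (Fin.le_last j) hj
      have hi' : i < Fin.last n := hij.trans hj'
      have := hmono (show (i.castPred hi'.ne) < (j.castPred hj'.ne) from hij)
      simpa [Fin.init] using this
  · intro i
    by_cases hi : i = Fin.last n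
    · subst hi; exact ⟨h0, hlt⟩
    · have hi' : i < Fin.last n := lt_of_le_of_ne (Fin.le_last i) hi
      have := hmem (i.castPred hi'.ne)
      simp only [Fin.init, Fin.castSucc_castPred] at this
      exact ⟨this.1, this.2.trans hlt⟩

/-- if `t ∈ [τ_m, τ_{m+1})` then
`{(t₁,…,tₙ,s) : s ∈ [0, τ_m), (t₁,…,tₙ) ∈ Δ_n(s) ∖ Δ_n^τ(s)} ∪
 {(t₁,…,tₙ,s) : s ∈ [τ_m, t), (t₁,…,tₙ) ∈ Δ_n(s)} ⊆ Δ_{n+1}(t) ∖ Δ_{n+1}^τ(t)`. -/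
theorem statement12 (τ : TimePartition) (n : ℕ) (hn : 1 ≤ n) (m : ℕ) (t : ℝ)
    (ht : t ∈ Set.Ico (τ.t m) (τ.t (m + 1))) :
    {x : Fin (n + 1) → ℝ |
        x (Fin.last n) ∈ Set.Ico (0 : ℝ) (τ.t m) ∧
        Fin.init x ∈ simplex n (x (Fin.last n)) \ τ.simplexDiscAt n (x (Fin.last n))} ∪
      {x : Fin (n + 1) → ℝ |
        x (Fin.last n) ∈ Set.Ico (τ.t m) t ∧
        Fin.init x ∈ simplex n (x (Fin.last n))} ⊆
      simplex (n + 1) t \ τ.simplexDiscAt (n + 1) t := by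
  rintro x (⟨hs, hx, hxd⟩ | ⟨hs, hx⟩)
  · have h0 : (0:ℝ) ≤ x (Fin.last n) := hs.1
    have hlt : x (Fin.last n) < t := lt_of_lt_of_le hs.2 ht.1
    refine ⟨mem_simplex_snoc h0 hlt hx, ?_⟩
    intro hmem
    simp only [TimePartition.simplexDiscAt, TimePartition.simplexDisc, Set.mem_iUnion,
      Set.mem_setOf_eq] at hmem
    obtain ⟨m', hm', p, ⟨hpmono, hpb⟩, hbox⟩ := hmem
    -- init x ∈ simplexDiscAt n (x (Fin.last n)), contradiction
    apply hxd
    simp only [TimePartition.simplexDiscAt, TimePartition.simplexDisc, Set.mem_iUnion,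
      Set.mem_setOf_eq]
    refine ⟨p (Fin.last n), hbox (Fin.last n), Fin.init p, ⟨?_, ?_⟩, ?_⟩
    · intro i j hij
      exact hpmono (Fin.castSucc_lt_castSucc_iff.mpr hij)
    · intro i
      exact hpmono (Fin.castSucc_lt_last i)
    · intro i
      simpa [Fin.init] using hbox i.castSucc
  · have hm0 : (0:ℝ) ≤ τ.t m := τ.zero ▸ τ.strictMono.monotone (Nat.zero_le m)
    refine ⟨mem_simplex_snoc (hm0.trans hs.1) hs.2 hx, ?_⟩
    intro hmem
    simp only [TimePartition.simplexDiscAt, TimePartition.simplexDisc, Set.mem_iUnion,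
      Set.mem_setOf_eq] at hmem
    obtain ⟨m', hm', p, ⟨hpmono, hpb⟩, hbox⟩ := hmem
    have hmm : m' = m := τ.interval_unique hm' ht
    subst hmm
    have h1 : p (Fin.last n) + 1 ≤ m' := hpb (Fin.last n)
    have h2 : x (Fin.last n) < τ.t (p (Fin.last n) + 1) := (hbox (Fin.last n)).2
    exact absurd (le_trans (τ.strictMono.monotone h1) hs.1) (not_le.2 h2)
end

section
/- For every n ≥ 1, t > 0 and ε > 0 there exists a partition τ₀ of [0,∞) such that for every partition τ refining τ₀, the n-dimensional Lebesgue measure of Δ_n(t) ∖ Δ_n^τ(t) is less than ε; that is, the Lebesgue measure of Δ_n(t) ∖ Δ_n^τ(t) tends to 0 along the net of partitions directed by refinement. -/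
open MeasureTheory Filter Topology
open scoped ENNReal

/-- A partition of `[0, ∞)`: a strictly increasing sequence of nonnegative reals starting
at `0` and tending to infinity. -/
structure HalfLinePartition where
  t : ℕ → ℝ
  strictMono : StrictMono t
  zero : t 0 = 0
  tendsto_atTop : Filter.Tendsto t Filter.atTop Filter.atTop

/-- `σ` refines `τ` if every point of `τ` is a point of `σ`. -/
def HalfLinePartition.Refines (σ τ : HalfLinePartition) : Prop := ∀ n, ∃ m, σ.t m = τ.t n

/-- The box `[τ_p, τ_{p+1}) = {x ∈ ℝⁿ : τ_{pᵢ} ≤ xᵢ < τ_{pᵢ+1} for all i}`. -/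
def HalfLinePartition.box (τ : HalfLinePartition) {n : ℕ} (p : Fin n → ℕ) : Set (Fin n → ℝ) :=
  {x | ∀ i, x i ∈ Set.Ico (τ.t (p i)) (τ.t (p i + 1))}

/-- `Δ_n^τ` at level `m`: the union of the boxes `[τ_p, τ_{p+1})` over all strictly
increasing `n`-tuples `p` with entries in `{0, …, m−1}`. -/
def HalfLinePartition.simplexDisc (τ : HalfLinePartition) (n m : ℕ) : Set (Fin n → ℝ) :=
  ⋃ p ∈ {p : Fin n → ℕ | StrictMono p ∧ ∀ i, p i < m}, τ.box p

/-- `Δ_n^τ(s)`: equal to `HalfLinePartition.simplexDisc τ n m` for the unique `m` with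
`s ∈ [τ_m, τ_{m+1})`, and empty if there is no such `m` (i.e. if `s < 0`). -/
def HalfLinePartition.simplexDiscAt (τ : HalfLinePartition) (n : ℕ) (s : ℝ) : Set (Fin n → ℝ) :=
  ⋃ m ∈ {m : ℕ | s ∈ Set.Ico (τ.t m) (τ.t (m + 1))}, τ.simplexDisc n m

/-- Every nonnegative real lies in some cell of a partition. -/
lemma HalfLinePartition.exists_cell (τ : HalfLinePartition) {s : ℝ} (hs : 0 ≤ s) :
    ∃ k, τ.t k ≤ s ∧ s < τ.t (k + 1) := by
  have hex : ∃ k, s < τ.t k := (τ.tendsto_atTop.eventually_gt_atTop s).exists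
  have hK0 : Nat.find hex ≠ 0 := by
    intro h
    have h1 := Nat.find_spec hex
    rw [h, τ.zero] at h1
    exact absurd h1 (not_lt.2 hs)
  refine ⟨Nat.find hex - 1, ?_, ?_⟩
  · by_contra h
    exact Nat.find_min hex (Nat.sub_lt (Nat.pos_of_ne_zero hK0) one_pos) (not_le.1 h)
  · rw [Nat.sub_add_cancel (Nat.one_le_iff_ne_zero.2 hK0)]
    exact Nat.find_spec hex

/-- for every `n ≥ 1`, `t > 0` and `ε > 0` there is a partition `τ₀` such
that for every refinement `τ` of `τ₀` the Lebesgue measure of `Δ_n(t) ∖ Δ_n^τ(t)` is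
less than `ε`: the measure of `Δ_n(t) ∖ Δ_n^τ(t)` tends to `0` along the net of
partitions directed by refinement. -/
theorem statement13 (n : ℕ) (hn : 1 ≤ n) (t : ℝ) (ht : 0 < t) (ε : ℝ) (hε : 0 < ε) :
    ∃ τ₀ : HalfLinePartition, ∀ τ : HalfLinePartition, τ.Refines τ₀ →
      volume (simplex n t \ τ.simplexDiscAt n t) < ENNReal.ofReal ε := by
  classical
  set M : ℝ := max t 1 with hMdef
  have hM1 : 1 ≤ M := le_max_right _ _
  have htM : t ≤ M := le_max_left _ _
  have hM0 : 0 < M := lt_of_lt_of_le one_pos hM1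
  obtain ⟨N, hNgt⟩ := exists_nat_gt ((n : ℝ) * n * M ^ (n + 2) / ε)
  have hNpos : (0 : ℝ) < N := lt_of_le_of_lt (by positivity) hNgt
  have hNne : (N : ℝ) ≠ 0 := hNpos.ne'
  set δ : ℝ := t / N with hδdef
  have hδ0 : 0 < δ := div_pos ht hNpos
  refine ⟨⟨fun k => (k : ℝ) * δ, ?_, by simp, ?_⟩, ?_⟩
  · intro a b hab
    exact mul_lt_mul_of_pos_right (by exact_mod_cast hab) hδ0
  · exact tendsto_natCast_atTop_atTop.atTop_mul_const hδ0
  intro τ hτ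
  -- `t` itself is a point of `τ`
  obtain ⟨m0, hm0⟩ := hτ N
  have hm0' : τ.t m0 = (N : ℝ) * δ := hm0
  have htm0 : τ.t m0 = t := by
    rw [hm0', mul_comm]
    exact div_mul_cancel₀ t hNne
  have hmem : t ∈ Set.Ico (τ.t m0) (τ.t (m0 + 1)) :=
    ⟨htm0.le, htm0 ▸ τ.strictMono (Nat.lt_succ_self m0)⟩
  -- covering boxes
  set Iq : ℕ → Set ℝ := fun q => Set.Ico ((q : ℝ) * δ) (((q : ℝ) + 1) * δ) with hIq
  set C : Fin n × Fin n × Fin N → Set (Fin n → ℝ) := fun z =>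
    if z.1 = z.2.1 then ∅ else
      Set.pi Set.univ (fun k => if k = z.1 ∨ k = z.2.1 then Iq z.2.2 else Set.Ico 0 t)
    with hC
  -- the covering
  have hsub : simplex n t \ τ.simplexDiscAt n t ⊆ ⋃ z, C z := by
    rintro x ⟨hxs, hxd⟩
    have hx0 : ∀ i, 0 ≤ x i := fun i => (hxs.2 i).1
    choose p hp1 hp2 using fun i : Fin n => τ.exists_cell (hx0 i)
    have hplt : ∀ i, p i < m0 := by
      intro i
      have h1 : τ.t (p i) < τ.t m0 := lt_of_le_of_lt (hp1 i) (htm0 ▸ (hxs.2 i).2)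
      exact τ.strictMono.lt_iff_lt.1 h1
    have hpmono : Monotone p := by
      intro a b hab
      by_contra h
      have h2 : p b + 1 ≤ p a := not_le.1 h
      have h3 : τ.t (p b + 1) ≤ x a := (τ.strictMono.monotone h2).trans (hp1 a)
      have h4 : x a ≤ x b := hxs.1.monotone hab
      linarith [hp2 b]
    have hnotS : ¬ StrictMono p := by
      intro hS
      apply hxd
      exact Set.mem_biUnion hmem
        (Set.mem_biUnion (⟨hS, hplt⟩ : p ∈ {p : Fin n → ℕ | StrictMono p ∧ ∀ i, p i < m0})
          (fun i => ⟨hp1 i, hp2 i⟩))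
    have hninj : ¬ Function.Injective p :=
      fun hinj => hnotS (hpmono.strictMono_of_injective hinj)
    obtain ⟨a, b, hpab, hne⟩ := Function.not_injective_iff.1 hninj
    -- the τ₀-cell containing the τ-cell of `x a`
    set q : ℕ := ⌊τ.t (p a) / δ⌋₊ with hqdef
    have htpa0 : 0 ≤ τ.t (p a) := τ.zero ▸ τ.strictMono.monotone (Nat.zero_le _)
    have hq1 : (q : ℝ) * δ ≤ τ.t (p a) := by
      rw [← le_div_iff₀ hδ0]
      exact Nat.floor_le (div_nonneg htpa0 hδ0.le)
    have hq2 : τ.t (p a) < ((q : ℝ) + 1) * δ := by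
      rw [← div_lt_iff₀ hδ0]
      exact Nat.lt_floor_add_one _
    have hcell : τ.t (p a + 1) ≤ ((q : ℝ) + 1) * δ := by
      by_contra hgt
      obtain ⟨m', hm'⟩ := hτ (q + 1)
      have hm'' : τ.t m' = ((q : ℝ) + 1) * δ := by rw [hm']; push_cast; ring
      have h5 : p a < m' := τ.strictMono.lt_iff_lt.1 (by rw [hm'']; exact hq2)
      have h6 : m' < p a + 1 := τ.strictMono.lt_iff_lt.1 (by rw [hm'']; exact not_le.1 hgt)
      omega
    have hqN : q < N := by
      have h7 : (q : ℝ) * δ < (N : ℝ) * δ := by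
        have : x a < t := (hxs.2 a).2
        have ht' : t = (N : ℝ) * δ := by rw [hδdef, mul_comm]; rw [div_mul_cancel₀ t hNne]
        calc (q : ℝ) * δ ≤ τ.t (p a) := hq1
          _ ≤ x a := hp1 a
          _ < t := this
          _ = (N : ℝ) * δ := ht'
      exact_mod_cast lt_of_mul_lt_mul_right h7 hδ0.le
    refine Set.mem_iUnion.2 ⟨⟨a, b, ⟨q, hqN⟩⟩, ?_⟩
    show x ∈ C (a, b, ⟨q, hqN⟩)
    rw [hC]
    simp only [if_neg hne]
    intro k _
    show x k ∈ if k = a ∨ k = b then Iq q else Set.Ico 0 t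
    by_cases hk : k = a ∨ k = b
    · rw [if_pos hk]
      have hpk : p k = p a := by
        rcases hk with rfl | rfl
        · rfl
        · exact hpab.symm
      exact ⟨le_trans hq1 (hpk ▸ hp1 k), lt_of_lt_of_le (hpk ▸ hp2 k) hcell⟩
    · rw [if_neg hk]
      exact hxs.2 k
  -- measure estimates
  have hbox : ∀ z, volume (C z) ≤ ENNReal.ofReal (δ ^ 2 * t ^ (n - 2)) := by
    rintro ⟨i, j, q⟩
    rw [hC]
    by_cases hij : i = j
    · simp [hij]
    · show volume (if i = j then (∅ : Set (Fin n → ℝ)) else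
          Set.univ.pi fun k => if k = i ∨ k = j then Iq q else Set.Ico 0 t) ≤ _
      rw [if_neg hij]
      have hvol : volume (Set.pi Set.univ
          (fun k => if k = i ∨ k = j then Iq q else Set.Ico (0:ℝ) t)) =
          ∏ k : Fin n, volume (if k = i ∨ k = j then Iq q else Set.Ico (0:ℝ) t) :=
        volume_pi_pi _
      rw [hvol]
      have hfe : ∀ k : Fin n, volume (if k = i ∨ k = j then Iq q else Set.Ico (0:ℝ) t) =
          if k = i ∨ k = j then ENNReal.ofReal δ else ENNReal.ofReal t := by
        intro k
        by_cases hk : k = i ∨ k = j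
        · rw [if_pos hk, if_pos hk, hIq]
          simp only [Real.volume_Ico]
          congr 1
          ring
        · rw [if_neg hk, if_neg hk, Real.volume_Ico, sub_zero]
      simp only [hfe]
      rw [Finset.prod_ite]
      have hfil : Finset.univ.filter (fun k : Fin n => k = i ∨ k = j) = {i, j} := by
        ext k; simp
      have hcard1 : (Finset.univ.filter (fun k : Fin n => k = i ∨ k = j)).card = 2 := by
        rw [hfil]; exact Finset.card_pair hij
      have hcard2 : (Finset.univ.filter (fun k : Fin n => ¬(k = i ∨ k = j))).card = n - 2 := by
        have := Finset.card_filter_add_card_filter_not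
          (s := (Finset.univ : Finset (Fin n))) (p := fun k => k = i ∨ k = j)
        rw [Finset.card_univ, Fintype.card_fin] at this
        omega
      rw [Finset.prod_const, Finset.prod_const, hcard1, hcard2,
        ← ENNReal.ofReal_pow hδ0.le, ← ENNReal.ofReal_pow ht.le,
        ← ENNReal.ofReal_mul (by positivity)]
  calc volume (simplex n t \ τ.simplexDiscAt n t)
      ≤ volume (⋃ z, C z) := measure_mono hsub
    _ ≤ ∑ z : Fin n × Fin n × Fin N, volume (C z) := measure_iUnion_fintype_le _ _
    _ ≤ ∑ _z : Fin n × Fin n × Fin N, ENNReal.ofReal (δ ^ 2 * t ^ (n - 2)) :=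
        Finset.sum_le_sum fun z _ => hbox z
    _ = (n * n * N : ℕ) * ENNReal.ofReal (δ ^ 2 * t ^ (n - 2)) := by
        rw [Finset.sum_const, Finset.card_univ]
        simp [Fintype.card_prod, mul_assoc, nsmul_eq_mul]
    _ < ENNReal.ofReal ε := by
        rw [← ENNReal.ofReal_natCast, ← ENNReal.ofReal_mul (by positivity),
          ENNReal.ofReal_lt_ofReal_iff hε]
        push_cast
        have hA : (n : ℝ) * n * N * (δ ^ 2 * t ^ (n - 2)) =
            (n : ℝ) * n * (t ^ 2 * t ^ (n - 2)) / N := by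
          rw [hδdef]; field_simp
        rw [hA]
        have hpow : t ^ 2 * t ^ (n - 2) ≤ M ^ (n + 2) := by
          calc t ^ 2 * t ^ (n - 2) = t ^ (2 + (n - 2)) := (pow_add t 2 (n - 2)).symm
            _ ≤ M ^ (2 + (n - 2)) := pow_le_pow_left₀ ht.le htM _
            _ ≤ M ^ (n + 2) := pow_le_pow_right₀ hM1 (by omega)
        have h8 : (n : ℝ) * n * (t ^ 2 * t ^ (n - 2)) ≤ (n : ℝ) * n * M ^ (n + 2) :=
          mul_le_mul_of_nonneg_left hpow (by positivity)
        have h9 : (n : ℝ) * n * M ^ (n + 2) < N * ε := (div_lt_iff₀ hε).1 hNgt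
        rw [div_lt_iff₀ hNpos]
        calc (n : ℝ) * n * (t ^ 2 * t ^ (n - 2)) ≤ (n : ℝ) * n * M ^ (n + 2) := h8
          _ < N * ε := h9
          _ = ε * N := mul_comm _ _
end
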